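/- Let X be a topological vector space, J : X → [0,∞], and D ⊆ dom J satisfying t·cl(D) ⊆ D for all t ∈ (0,1). If J is ru-usc in D with constant a > 0, then the function Ĵ(u) := liminf_{t→1⁻} J(tu) is ru-usc in cl(D) ∩ dom Ĵ, with Δ^a_{Ĵ, cl(D)∩dom Ĵ}(t) ≤ Δ^a_{J,D}(t) for all t ∈ (0,1). -/

import Mathlib

open Filter Set Topology Pointwise

/-- `Δ^a_{J,D}(t) := sup_{u∈D} (J(tu) − J(u))/(a + J(u))`, computed in `EReal`. -/
noncomputable def ruDelta {X : Type*} [AddCommGroup X] [Module ℝ X]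
    (J : X → ENNReal) (D : Set X) (a : ℝ) (t : ℝ) : EReal :=
  ⨆ u ∈ D, (((J (t • u)) : EReal) - ((J u) : EReal)) / ((a : EReal) + ((J u) : EReal))

/-- `Ĵ(u) := liminf_{t→1⁻} J(tu)`. -/
noncomputable def ruHat {X : Type*} [AddCommGroup X] [Module ℝ X]
    (J : X → ENNReal) (u : X) : ENNReal :=
  Filter.liminf (fun t : ℝ => J (t • u)) (nhdsWithin 1 (Set.Iio 1))

lemma ereal_coe_of_ne_top' {x : ENNReal} (hx : x ≠ ⊤) :
    (x : EReal) = ((x.toReal : ℝ) : EReal) := by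
  lift x to NNReal using hx
  simp [EReal.coe_nnreal_eq_coe_real]

/-- If `J` is ru-usc in `D` (with constant `a > 0`) and `t·cl(D) ⊆ D` for `t ∈ (0,1)`, then
`Ĵ` is ru-usc in `cl(D) ∩ dom Ĵ`, with `Δ^a_{Ĵ,cl(D)∩dom Ĵ}(t) ≤ Δ^a_{J,D}(t)` for
`t ∈ (0,1)`. -/
theorem stmt2 {X : Type*} [AddCommGroup X] [Module ℝ X] [TopologicalSpace X]
    (J : X → ENNReal) (D : Set X) (hD : D ⊆ {u | J u < ⊤})
    (hstar : ∀ t ∈ Set.Ioo (0 : ℝ) 1, t • closure D ⊆ D)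
    (a : ℝ) (ha : 0 < a)
    (hru : Filter.limsup (fun t : ℝ => ruDelta J D a t) (nhdsWithin 1 (Set.Iio 1)) ≤ 0) :
    (∀ t ∈ Set.Ioo (0 : ℝ) 1,
      ruDelta (ruHat J) (closure D ∩ {u | ruHat J u < ⊤}) a t ≤ ruDelta J D a t) ∧
    Filter.limsup (fun t : ℝ => ruDelta (ruHat J) (closure D ∩ {u | ruHat J u < ⊤}) a t)
      (nhdsWithin 1 (Set.Iio 1)) ≤ 0 := by
  have hmain : ∀ t ∈ Set.Ioo (0 : ℝ) 1,
      ruDelta (ruHat J) (closure D ∩ {u | ruHat J u < ⊤}) a t ≤ ruDelta J D a t := by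
    intro t ht
    rw [ruDelta]
    refine iSup₂_le fun u hu => ?_
    obtain ⟨huD, huT'⟩ := hu
    have huT : ruHat J u ≠ ⊤ := huT'.ne
    have hterm : ∀ v ∈ D,
        ((J (t • v) : EReal) - (J v : EReal)) / ((a : EReal) + (J v : EReal)) ≤ ruDelta J D a t :=
      fun v hv => by
        rw [ruDelta]
        exact le_biSup
          (fun v => ((J (t • v) : EReal) - (J v : EReal)) / ((a : EReal) + (J v : EReal))) hv
    have hDne : D.Nonempty := closure_nonempty_iff.mp ⟨u, huD⟩
    obtain ⟨v₀, hv₀⟩ := hDne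
    -- `-1 ≤ Δ(t)`
    have hneg1 : (-1 : EReal) ≤ ruDelta J D a t := by
      have hv₀T : J v₀ ≠ ⊤ := (hD hv₀).ne
      set x₀ := (J v₀).toReal with hx₀
      have hx₀0 : 0 ≤ x₀ := ENNReal.toReal_nonneg
      refine le_trans ?_ (hterm v₀ hv₀)
      rw [ereal_coe_of_ne_top' hv₀T, ← hx₀, show ((a : EReal) + (x₀ : ℝ)) = (((a + x₀ : ℝ)) : EReal)
        from (EReal.coe_add a x₀).symm,
        EReal.le_div_iff_mul_le (by exact_mod_cast (by linarith : (0:ℝ) < a + x₀))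
          (EReal.coe_ne_top _)]
      calc (-1 : EReal) * ((a + x₀ : ℝ) : EReal) = ((-(a + x₀) : ℝ) : EReal) := by
            rw [show (-1 : EReal) = ((-1 : ℝ) : EReal) by simp, ← EReal.coe_mul]
            exact congrArg _ (by ring)
        _ ≤ ((0 - x₀ : ℝ) : EReal) := by
            rw [EReal.coe_le_coe_iff]; linarith
        _ = (0 : EReal) - ((x₀ : ℝ) : EReal) := by
            rw [EReal.coe_sub, EReal.coe_zero]
        _ ≤ (J (t • v₀) : EReal) - ((x₀ : ℝ) : EReal) := by
            rw [sub_eq_add_neg, sub_eq_add_neg]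
            exact add_le_add_left (by exact_mod_cast (zero_le : (0:ENNReal) ≤ J (t • v₀))) _
    rcases eq_or_ne (ruDelta J D a t) ⊤ with hΔtop | hΔtop
    · rw [hΔtop]; exact le_top
    have hΔbot : ruDelta J D a t ≠ ⊥ :=
      ne_of_gt (lt_of_lt_of_le
        (by rw [show (-1 : EReal) = ((-1 : ℝ) : EReal) by simp]; exact EReal.bot_lt_coe _) hneg1)
    set M := (ruDelta J D a t).toReal with hMdef
    have hM : (M : EReal) = ruDelta J D a t := EReal.coe_toReal hΔtop hΔbot
    have hM1 : (-1 : ℝ) ≤ M := by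
      rw [← EReal.coe_le_coe_iff (x := -1) (y := M), hM,
        show ((-1 : ℝ) : EReal) = (-1 : EReal) by simp]
      exact hneg1
    set a' := ENNReal.ofReal a with ha'def
    set c' := ENNReal.ofReal (1 + M) with hc'def
    have ha'top : a' ≠ ⊤ := ENNReal.ofReal_ne_top
    have hc'top : c' ≠ ⊤ := ENNReal.ofReal_ne_top
    -- eventual pointwise bound
    have hev : ∀ᶠ s in 𝓝[<] (1 : ℝ), J (s • (t • u)) + a' ≤ c' * (a' + J (s • u)) := by
      filter_upwards [Ioo_mem_nhdsLT (by norm_num : (0:ℝ) < 1)] with s hs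
      have hsu : s • u ∈ D := hstar s hs (Set.smul_mem_smul_set huD)
      have hJsu : J (s • u) ≠ ⊤ := (hD hsu).ne
      set x := (J (s • u)).toReal with hx
      have hx0 : 0 ≤ x := ENNReal.toReal_nonneg
      have ht0 := hterm (s • u) hsu
      have hAne : J (t • (s • u)) ≠ ⊤ := by
        intro hA
        rw [hA, ereal_coe_of_ne_top' hJsu, ← hx, EReal.coe_ennreal_top, EReal.top_sub_coe,
          show ((a : EReal) + (x : ℝ)) = (((a + x : ℝ)) : EReal) from (EReal.coe_add a x).symm,
          EReal.top_div_of_pos_ne_top (by exact_mod_cast (by linarith : (0:ℝ) < a + x))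
            (EReal.coe_ne_top _), ← hM] at ht0
        exact absurd ht0 (by simp)
      set y := (J (t • (s • u))).toReal with hy
      have hy0 : 0 ≤ y := ENNReal.toReal_nonneg
      rw [ereal_coe_of_ne_top' hJsu, ereal_coe_of_ne_top' hAne, ← hx, ← hy, ← hM,
        ← EReal.coe_sub, ← EReal.coe_add, ← EReal.coe_div, EReal.coe_le_coe_iff] at ht0
      have hkey : y + a ≤ (1 + M) * (a + x) := by
        rw [div_le_iff₀ (by linarith : (0:ℝ) < a + x)] at ht0
        nlinarith
      calc J (s • (t • u)) + a' = J (t • (s • u)) + a' := by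
            rw [smul_smul, smul_smul, mul_comm]
        _ = ENNReal.ofReal (y + a) := by
            rw [ENNReal.ofReal_add hy0 ha.le, ha'def, hy, ENNReal.ofReal_toReal hAne]
        _ ≤ ENNReal.ofReal ((1 + M) * (a + x)) := ENNReal.ofReal_le_ofReal hkey
        _ = c' * (a' + J (s • u)) := by
            rw [ENNReal.ofReal_mul (by linarith : (0:ℝ) ≤ 1 + M),
              ENNReal.ofReal_add ha.le hx0, hx, ENNReal.ofReal_toReal hJsu, ha'def, hc'def]
    -- pass to liminf
    have h1 : ruHat J (t • u) + a'
        = Filter.liminf (fun s : ℝ => J (s • (t • u)) + a') (𝓝[<] (1:ℝ)) := by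
      have hmono : Monotone (fun z : ENNReal => z + a') := fun z w h => add_le_add_left h _
      exact hmono.map_liminf_of_continuousAt _ (continuous_add_right a').continuousAt
    have h2 : c' * (a' + ruHat J u)
        = Filter.liminf (fun s : ℝ => c' * (a' + J (s • u))) (𝓝[<] (1:ℝ)) := by
      have hmono : Monotone (fun z : ENNReal => c' * (a' + z)) :=
        fun z w h => mul_le_mul_right (add_le_add_right h _) _
      have hcont : Continuous (fun z : ENNReal => c' * (a' + z)) :=
        (ENNReal.continuous_const_mul hc'top).comp (continuous_add_left a')
      exact hmono.map_liminf_of_continuousAt _ hcont.continuousAt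
    have h3 : ruHat J (t • u) + a' ≤ c' * (a' + ruHat J u) := by
      rw [h1, h2]
      exact liminf_le_liminf hev
    have hRHSne : c' * (a' + ruHat J u) ≠ ⊤ :=
      ENNReal.mul_ne_top hc'top (ENNReal.add_ne_top.mpr ⟨ha'top, huT⟩)
    have hHtop : ruHat J (t • u) ≠ ⊤ := by
      intro h
      have := lt_of_le_of_lt h3 hRHSne.lt_top
      rw [h, top_add] at this
      exact absurd this (lt_irrefl _)
    set β := (ruHat J u).toReal with hβ
    set γ := (ruHat J (t • u)).toReal with hγ
    have hβ0 : 0 ≤ β := ENNReal.toReal_nonneg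
    have hγ0 : 0 ≤ γ := ENNReal.toReal_nonneg
    have hkey2 : γ + a ≤ (1 + M) * (a + β) := by
      have h4 := ENNReal.toReal_mono hRHSne h3
      rw [ENNReal.toReal_add hHtop ha'top, ENNReal.toReal_mul,
        ENNReal.toReal_add ha'top huT, ha'def, ENNReal.toReal_ofReal ha.le, hc'def,
        ENNReal.toReal_ofReal (by linarith : (0:ℝ) ≤ 1 + M)] at h4
      exact h4
    rw [ereal_coe_of_ne_top' hHtop, ereal_coe_of_ne_top' huT, ← hβ, ← hγ, ← hM,
      ← EReal.coe_sub, ← EReal.coe_add, ← EReal.coe_div, EReal.coe_le_coe_iff,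
      div_le_iff₀ (by linarith : (0:ℝ) < a + β)]
    nlinarith
  refine ⟨hmain, le_trans (limsup_le_limsup ?_) hru⟩
  filter_upwards [Ioo_mem_nhdsLT (by norm_num : (0:ℝ) < 1)] with s hs using hmain s hs
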